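/- arXiv:2406.16883 — 4 statements merged into one kernel-verified Lean document; each statement's English description precedes it below -/
import Mathlib

section
/- Assume hypotheses (H1), (H2) and (H3). Then Θ has the fiber specification property: for every ε > 0 there exists m = m(ε) ∈ ℕ such that for every ω ∈ Ω and every m-spaced ω-specification (with intervals I₁,…,I_k ⊆ ℤ and map P_ω), there exists a point x ∈ M with d_M(P_ω(t), F_ω^t x) < ε for all t ∈ ⋃_{i=1}^k I_i; moreover m(ε) does not depend on ω or on the number k of intervals. -/
open Set Filter Topology MeasureTheory ENNReal NNReal

noncomputable section

namespace Paper

variable {Ω M : Type*} [MetricSpace Ω] [MetricSpace M]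

/-- Fiber forward iterates `F_ω^n = F_{θ^{n-1}ω} ∘ ⋯ ∘ F_ω` as homeomorphisms. -/
def fIterH (θ : Ω ≃ₜ Ω) (F : Ω → M ≃ₜ M) (ω : Ω) : ℕ → (M ≃ₜ M)
  | 0 => Homeomorph.refl M
  | n + 1 => (fIterH θ F ω n).trans (F ((⇑θ)^[n] ω))

/-- Fiber iterates `F_ω^t` for `t ∈ ℤ`, with `F_ω^{-n} = (F_{θ^{-n}ω}^n)⁻¹`. -/
def fIterZ (θ : Ω ≃ₜ Ω) (F : Ω → M ≃ₜ M) (ω : Ω) : ℤ → (M ≃ₜ M)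
  | Int.ofNat n => fIterH θ F ω n
  | Int.negSucc n => (fIterH θ F ((⇑θ.symm)^[n + 1] ω) (n + 1)).symm

/-- The iterates `θ^t` of the base homeomorphism, `t ∈ ℤ`. -/
def thIterZ (θ : Ω ≃ₜ Ω) : ℤ → Ω → Ω
  | Int.ofNat n => (⇑θ)^[n]
  | Int.negSucc n => (⇑θ.symm)^[n + 1]

/-- Local stable set `W^s_ε(ω,x)`. -/
def Ws (θ : Ω ≃ₜ Ω) (F : Ω → M ≃ₜ M) (ε : ℝ) (ω : Ω) (x : M) : Set M :=
  {y | ∀ n : ℕ, dist (fIterH θ F ω n x) (fIterH θ F ω n y) ≤ ε}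

/-- Local unstable set `W^u_ε(ω,x)`. -/
def Wu (θ : Ω ≃ₜ Ω) (F : Ω → M ≃ₜ M) (ε : ℝ) (ω : Ω) (x : M) : Set M :=
  {y | ∀ n : ℕ, dist (fIterZ θ F ω (-(n : ℤ)) x) (fIterZ θ F ω (-(n : ℤ)) y) ≤ ε}

section Aux

variable (θ : Ω ≃ₜ Ω) (F : Ω → M ≃ₜ M)

lemma iter_symm_cancel (n : ℕ) (ω : Ω) : (⇑θ)^[n] ((⇑θ.symm)^[n] ω) = ω := by
  induction n with
  | zero => rfl
  | succ n ih =>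
      rw [Function.iterate_succ_apply, Function.iterate_succ_apply',
        Homeomorph.apply_symm_apply, ih]

lemma symm_iter_cancel (n : ℕ) (ω : Ω) : (⇑θ.symm)^[n] ((⇑θ)^[n] ω) = ω := by
  induction n with
  | zero => rfl
  | succ n ih =>
      rw [Function.iterate_succ_apply, Function.iterate_succ_apply',
        Homeomorph.symm_apply_apply, ih]

lemma fIterH_add (ω : Ω) (n k : ℕ) (x : M) :
    fIterH θ F ω (n + k) x = fIterH θ F ((⇑θ)^[n] ω) k (fIterH θ F ω n x) := by
  induction k with
  | zero => rfl
  | succ k ih =>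
      show fIterH θ F ω ((n + k) + 1) x = _
      rw [show fIterH θ F ω ((n+k)+1) x
            = F ((⇑θ)^[n+k] ω) (fIterH θ F ω (n+k) x) from rfl, ih]
      rw [show fIterH θ F ((⇑θ)^[n] ω) (k+1) (fIterH θ F ω n x)
            = F ((⇑θ)^[k] ((⇑θ)^[n] ω)) (fIterH θ F ((⇑θ)^[n] ω) k (fIterH θ F ω n x)) from rfl]
      rw [← Function.iterate_add_apply, Nat.add_comm k n]

lemma fIterH_add_symm (ω : Ω) (n k : ℕ) (y : M) :
    (fIterH θ F ω (n + k)).symm y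
      = (fIterH θ F ω n).symm ((fIterH θ F ((⇑θ)^[n] ω) k).symm y) := by
  set x := (fIterH θ F ω (n + k)).symm y with hx
  have h1 : fIterH θ F ω (n + k) x = y := Homeomorph.apply_symm_apply _ _
  rw [fIterH_add] at h1
  have h2 : (fIterH θ F ((⇑θ)^[n] ω) k).symm y = fIterH θ F ω n x := by
    rw [← h1, Homeomorph.symm_apply_apply]
  rw [h2, Homeomorph.symm_apply_apply]

lemma fIterZ_coe (ω : Ω) (n : ℕ) : fIterZ θ F ω (n : ℤ) = fIterH θ F ω n := rfl

lemma fIterZ_zero (ω : Ω) : fIterZ θ F ω (0 : ℤ) = Homeomorph.refl M := rfl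

lemma fIterZ_neg_coe (ω : Ω) (n : ℕ) :
    fIterZ θ F ω (-(n : ℤ)) = (fIterH θ F ((⇑θ.symm)^[n] ω) n).symm := by
  cases n with
  | zero => rfl
  | succ n => rfl

lemma thIterZ_coe (ω : Ω) (n : ℕ) : thIterZ θ (n : ℤ) ω = (⇑θ)^[n] ω := rfl

lemma thIterZ_neg_coe (ω : Ω) (n : ℕ) : thIterZ θ (-(n : ℤ)) ω = (⇑θ.symm)^[n] ω := by
  cases n with
  | zero => rfl
  | succ n => rfl

lemma thIterZ_add (s t : ℤ) (ω : Ω) :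
    thIterZ θ (s + t) ω = thIterZ θ t (thIterZ θ s ω) := by
  obtain ⟨a, rfl | rfl⟩ : ∃ n : ℕ, s = n ∨ s = -n := ⟨s.natAbs, Int.natAbs_eq s⟩ <;>
  obtain ⟨b, rfl | rfl⟩ : ∃ n : ℕ, t = n ∨ t = -n := ⟨t.natAbs, Int.natAbs_eq t⟩
  · rw [show (a : ℤ) + b = ((a + b : ℕ) : ℤ) by omega, thIterZ_coe, thIterZ_coe,
      thIterZ_coe, Nat.add_comm, Function.iterate_add_apply]
  · rcases Nat.le_total b a with h | h
    · obtain ⟨c, rfl⟩ := Nat.exists_eq_add_of_le h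
      rw [show (↑(b + c) : ℤ) + -↑b = (c : ℤ) by omega, thIterZ_coe, thIterZ_neg_coe,
        thIterZ_coe, Function.iterate_add_apply, symm_iter_cancel]
    · obtain ⟨c, rfl⟩ := Nat.exists_eq_add_of_le h
      rw [show (a : ℤ) + -(↑(a + c)) = -(c : ℤ) by omega, thIterZ_neg_coe, thIterZ_neg_coe,
        thIterZ_coe, Nat.add_comm a c, Function.iterate_add_apply, symm_iter_cancel]
  · rcases Nat.le_total a b with h | h
    · obtain ⟨c, rfl⟩ := Nat.exists_eq_add_of_le h
      rw [show -(a : ℤ) + ↑(a + c) = (c : ℤ) by omega, thIterZ_coe, thIterZ_neg_coe,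
        thIterZ_coe, Nat.add_comm a c, Function.iterate_add_apply, iter_symm_cancel]
    · obtain ⟨c, rfl⟩ := Nat.exists_eq_add_of_le h
      rw [show -(↑(b + c) : ℤ) + ↑b = -(c : ℤ) by omega, thIterZ_neg_coe, thIterZ_neg_coe,
        thIterZ_coe, Function.iterate_add_apply, iter_symm_cancel]
  · rw [show -(a : ℤ) + -↑b = -((a + b : ℕ) : ℤ) by omega, thIterZ_neg_coe, thIterZ_neg_coe,
      thIterZ_neg_coe, Nat.add_comm, Function.iterate_add_apply]

lemma fIterZ_cocycle (ω : Ω) (s t : ℤ) (x : M) :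
    fIterZ θ F ω (s + t) x = fIterZ θ F (thIterZ θ s ω) t (fIterZ θ F ω s x) := by
  obtain ⟨a, rfl | rfl⟩ : ∃ n : ℕ, s = n ∨ s = -n := ⟨s.natAbs, Int.natAbs_eq s⟩ <;>
  obtain ⟨b, rfl | rfl⟩ : ∃ n : ℕ, t = n ∨ t = -n := ⟨t.natAbs, Int.natAbs_eq t⟩
  · rw [show (a : ℤ) + b = ((a + b : ℕ) : ℤ) by omega, fIterZ_coe, fIterZ_coe,
      thIterZ_coe, fIterZ_coe, fIterH_add]
  · rw [thIterZ_coe, fIterZ_coe, fIterZ_neg_coe]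
    rcases Nat.le_total b a with h | h
    · obtain ⟨c, rfl⟩ := Nat.exists_eq_add_of_le h
      rw [show (↑(b + c) : ℤ) + -↑b = (c : ℤ) by omega, fIterZ_coe]
      have hfib : (⇑θ.symm)^[b] ((⇑θ)^[b + c] ω) = (⇑θ)^[c] ω := by
        rw [Function.iterate_add_apply, symm_iter_cancel]
      rw [hfib, Nat.add_comm b c, fIterH_add, Homeomorph.symm_apply_apply]
    · obtain ⟨c, rfl⟩ := Nat.exists_eq_add_of_le h
      rw [show (a : ℤ) + -(↑(a + c)) = -(c : ℤ) by omega, fIterZ_neg_coe]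
      have hfib : (⇑θ.symm)^[a + c] ((⇑θ)^[a] ω) = (⇑θ.symm)^[c] ω := by
        rw [Nat.add_comm a c, Function.iterate_add_apply, symm_iter_cancel]
      rw [hfib]
      have := fIterH_add_symm θ F ((⇑θ.symm)^[c] ω) c a (fIterH θ F ω a x)
      rw [iter_symm_cancel, Homeomorph.symm_apply_apply] at this
      rw [← this, Nat.add_comm a c]
  · rw [thIterZ_neg_coe, fIterZ_neg_coe, fIterZ_coe]
    rcases Nat.le_total a b with h | h
    · obtain ⟨c, rfl⟩ := Nat.exists_eq_add_of_le h
      rw [show -(a : ℤ) + ↑(a + c) = (c : ℤ) by omega, fIterZ_coe]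
      have h1 := fIterH_add θ F ((⇑θ.symm)^[a] ω) a c ((fIterH θ F ((⇑θ.symm)^[a] ω) a).symm x)
      rw [Homeomorph.apply_symm_apply, iter_symm_cancel] at h1
      rw [← h1]
    · obtain ⟨c, rfl⟩ := Nat.exists_eq_add_of_le h
      rw [show -(↑(b + c) : ℤ) + ↑b = -(c : ℤ) by omega, fIterZ_neg_coe]
      have hfib2 : (⇑θ)^[b] ((⇑θ.symm)^[b + c] ω) = (⇑θ.symm)^[c] ω := by
        rw [Function.iterate_add_apply, iter_symm_cancel]
      have h2 := fIterH_add_symm θ F ((⇑θ.symm)^[b + c] ω) b c x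
      rw [hfib2] at h2
      rw [h2, Homeomorph.apply_symm_apply]
  · rw [show -(a : ℤ) + -↑b = -((a + b : ℕ) : ℤ) by omega, fIterZ_neg_coe, fIterZ_neg_coe,
      thIterZ_neg_coe, fIterZ_neg_coe, Nat.add_comm a b]
    have hω'' : (⇑θ.symm)^[b + a] ω = (⇑θ.symm)^[b] ((⇑θ.symm)^[a] ω) :=
      Function.iterate_add_apply _ b a ω
    have hfib3 : (⇑θ)^[b] ((⇑θ.symm)^[b + a] ω) = (⇑θ.symm)^[a] ω := by
      rw [hω'', iter_symm_cancel]
    have h3 := fIterH_add_symm θ F ((⇑θ.symm)^[b + a] ω) b a x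
    rw [hfib3] at h3
    rw [h3, hω'']

end Aux

set_option maxHeartbeats 2000000 in
/-- under (H1),(H2),(H3), the skew product has the fiber specification
property: for every `ε > 0` there is `m = m(ε)` (independent of `ω` and of the number
`k` of intervals) such that every `m`-spaced `ω`-specification, given by intervals
`[a i, b i] ⊆ ℤ` (`i < k`) and a map `Pω` which is an orbit segment on each interval,
is `(ω,ε)`-shadowed by some point `x ∈ M`. -/
theorem fiber_specification
    [CompactSpace Ω] [CompactSpace M]
    (θ : Ω ≃ₜ Ω) (F : Ω → M ≃ₜ M)
    (hF : Continuous fun p : Ω × M => F p.1 p.2)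
    (ε₀ lam : ℝ) (hε₀ : 0 < ε₀) (hlam : 0 < lam)
    -- (H1), stable part
    (H1s : ∀ ε : ℝ, 0 < ε → ε ≤ ε₀ → ∀ (ω : Ω) (x y : M), y ∈ Ws θ F ε ω x →
      ∀ n : ℕ, dist (fIterH θ F ω n x) (fIterH θ F ω n y) ≤
        Real.exp (-(n : ℝ) * lam) * dist x y)
    -- (H1), unstable part
    (H1u : ∀ ε : ℝ, 0 < ε → ε ≤ ε₀ → ∀ (ω : Ω) (x y : M), y ∈ Wu θ F ε ω x →
      ∀ n : ℕ, dist (fIterZ θ F ω (-(n : ℤ)) x) (fIterZ θ F ω (-(n : ℤ)) y) ≤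
        Real.exp (-(n : ℝ) * lam) * dist x y)
    -- (H2), local product structure
    (H2 : ∀ ε : ℝ, 0 < ε → ε ≤ ε₀ → ∃ δ : ℝ, 0 < δ ∧ δ < ε ∧
      ∀ (ω : Ω) (x y : M), dist x y < δ → ∃! z : M, z ∈ Ws θ F ε ω x ∩ Wu θ F ε ω y)
    -- (H3), topological mixing on fibers
    (H3 : ∀ U V : Set M, IsOpen U → IsOpen V → U.Nonempty → V.Nonempty →
      ∃ N : ℕ, ∀ n : ℕ, N ≤ n → ∀ ω : Ω,
        ((fun z => fIterH θ F ω n z) '' U ∩ V).Nonempty) :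
    ∀ ε : ℝ, 0 < ε → ∃ m : ℕ,
      ∀ (ω : Ω) (k : ℕ) (a b : ℕ → ℤ) (Pω : ℤ → M),
        0 < k →
        -- the intervals are nonempty
        (∀ i, i < k → a i ≤ b i) →
        -- the specification is m-spaced: a (i+1) > b i + m
        (∀ i, i + 1 < k → b i + (m : ℤ) < a (i + 1)) →
        -- Pω is an orbit segment on each interval:
        -- F_{θ^{t₁}ω}^{t₂ - t₁} (Pω t₁) = Pω t₂ for t₁, t₂ in the same interval
        (∀ i, i < k → ∀ t₁ t₂ : ℤ, a i ≤ t₁ → t₁ ≤ b i → a i ≤ t₂ → t₂ ≤ b i →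
          fIterZ θ F (thIterZ θ t₁ ω) (t₂ - t₁) (Pω t₁) = Pω t₂) →
        -- shadowing point
        ∃ x : M, ∀ i, i < k → ∀ t : ℤ, a i ≤ t → t ≤ b i →
          dist (Pω t) (fIterZ θ F ω t x) < ε := by
  intro ε hε
  -- the basic scale β and the product-structure constant δ
  set β : ℝ := min ε ε₀ / 5 with hβdef
  have hβpos : 0 < β := by
    have := lt_min hε hε₀
    simp only [hβdef]; linarith
  have hβε₀ : β ≤ ε₀ := by
    have := min_le_right ε ε₀
    simp only [hβdef]; linarith
  have h5β : 5 * β ≤ ε := by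
    have := min_le_left ε ε₀
    simp only [hβdef]; linarith
  obtain ⟨δ, hδpos, hδβ, hδ⟩ := H2 β hβpos hβε₀
  -- finite cover of M by δ/4-balls
  obtain ⟨s, hs⟩ := IsCompact.elim_finite_subcover (isCompact_univ (X := M))
    (fun c : M => Metric.ball c (δ/4)) (fun c => Metric.isOpen_ball)
    (fun y _ => mem_iUnion.mpr ⟨y, Metric.mem_ball_self (by positivity)⟩)
  have hcov : ∀ y : M, ∃ c ∈ s, y ∈ Metric.ball c (δ/4) := by
    intro y
    have := hs (mem_univ y)
    simpa using this
  -- uniform mixing times for pairs of balls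
  choose Nf hNf using fun c₁ c₂ : M =>
    H3 (Metric.ball c₁ (δ/4)) (Metric.ball c₂ (δ/4)) Metric.isOpen_ball Metric.isOpen_ball
      ⟨c₁, Metric.mem_ball_self (by positivity)⟩ ⟨c₂, Metric.mem_ball_self (by positivity)⟩
  set m₁ : ℕ := s.sup (fun c₁ => s.sup (fun c₂ => Nf c₁ c₂)) with hm₁
  -- a time making the contraction small
  set c : ℝ := min (1/2) (δ/(4*β)) with hc
  have hcpos : 0 < c := by
    apply lt_min (by norm_num)
    positivity
  obtain ⟨M₂, hM₂⟩ := exists_nat_ge ((1/c)/lam)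
  set m : ℕ := max m₁ M₂ with hm
  set q : ℝ := Real.exp (-(m : ℝ) * lam) with hq
  have hqpos : 0 < q := Real.exp_pos _
  have hqc : q ≤ c := by
    have h1 : 1/c ≤ (m : ℝ) * lam := by
      have hm' : ((1/c)/lam) ≤ (m : ℝ) := le_trans hM₂ (by exact_mod_cast Nat.cast_le.mpr (le_max_right m₁ M₂))
      calc 1/c = ((1/c)/lam) * lam := by field_simp
        _ ≤ (m : ℝ) * lam := mul_le_mul_of_nonneg_right hm' hlam.le
    have h2 : 1/c ≤ Real.exp ((m : ℝ) * lam) := by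
      have := Real.add_one_le_exp ((m : ℝ) * lam)
      linarith
    rw [hq, show -(m : ℝ) * lam = -((m:ℝ) * lam) by ring, Real.exp_neg]
    rw [inv_le_comm₀ (Real.exp_pos _) hcpos]
    simpa [one_div] using h2
  have hq12 : q ≤ 1/2 := le_trans hqc (min_le_left _ _)
  have hqβδ : q * β ≤ δ/4 := by
    have h1 : q ≤ δ/(4*β) := le_trans hqc (min_le_right _ _)
    calc q * β ≤ (δ/(4*β)) * β := mul_le_mul_of_nonneg_right h1 hβpos.le
      _ = δ/4 := by field_simp
  -- the exponential decay comparison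
  have hqpow : ∀ (r nn : ℕ), (m : ℤ) * r ≤ (nn : ℤ) →
      Real.exp (-(nn : ℝ) * lam) ≤ q ^ r := by
    intro r nn h
    have hqr : q ^ r = Real.exp ((r : ℝ) * (-(m : ℝ) * lam)) := by
      rw [hq, Real.exp_nat_mul]
    rw [hqr]
    apply Real.exp_le_exp.mpr
    have hcast : (m : ℝ) * r ≤ (nn : ℝ) := by exact_mod_cast h
    nlinarith [hlam.le]
  refine ⟨m, ?_⟩
  intro ω k a b Pω hk hab hspace horb
  -- the gaps between segments grow linearly
  have hgap : ∀ (i' d : ℕ), i' + d < k → (m : ℤ) * d ≤ b (i' + d) - b i' := by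
    intro i' d
    induction d with
    | zero => intro _; simp
    | succ d ih =>
        intro hd
        have h1 := ih (by omega)
        have h2 := hspace (i' + d) (by omega)
        have h3 := hab (i' + d + 1) (by omega)
        have h4 : (m : ℤ) * ((d : ℤ) + 1) = (m : ℤ) * d + m := by ring
        have : ((d + 1 : ℕ) : ℤ) = (d : ℤ) + 1 := by push_cast; ring
        rw [show i' + (d + 1) = (i' + d) + 1 from rfl, this, h4]
        linarith
  -- key induction: shadowing of the first i+1 segments
  have key : ∀ i : ℕ, i < k → ∃ x : M, ∀ i' : ℕ, i' ≤ i → ∀ t : ℤ, a i' ≤ t → t ≤ b i' →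
      dist (Pω t) (fIterZ θ F ω t x) ≤ 5 * β - 4 * β * q ^ (i - i') := by
    intro i
    induction i with
    | zero =>
        intro h0
        refine ⟨(fIterZ θ F ω (a 0)).symm (Pω (a 0)), ?_⟩
        intro i' hi' t ht1 ht2
        have hi'0 : i' = 0 := Nat.le_zero.mp hi'
        subst hi'0
        have hco := fIterZ_cocycle θ F ω (a 0) (t - a 0) ((fIterZ θ F ω (a 0)).symm (Pω (a 0)))
        rw [show a 0 + (t - a 0) = t by ring, Homeomorph.apply_symm_apply] at hco
        have horb0 := horb 0 (by omega) (a 0) t le_rfl (hab 0 (by omega)) ht1 ht2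
        rw [hco, horb0, dist_self]
        have : q ^ (0 - 0) = 1 := by norm_num
        rw [this]
        linarith
    | succ i ih =>
        intro hik
        have hik' : i < k := by omega
        obtain ⟨x, hx⟩ := ih hik'
        have hBA : b i + (m : ℤ) < a (i + 1) := hspace i hik
        have hnz : (((a (i + 1) - b i).toNat : ℕ) : ℤ) = a (i + 1) - b i :=
          Int.toNat_of_nonneg (by omega)
        set n : ℕ := (a (i + 1) - b i).toNat with hndef
        have hmn : m < n := by omega
        -- locate the endpoint of the current orbit and the start of the next segment
        obtain ⟨c₁, hc₁s, hc₁⟩ := hcov (fIterZ θ F ω (b i) x)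
        obtain ⟨c₂, hc₂s, hc₂⟩ := hcov (Pω (a (i + 1)))
        have hNle : Nf c₁ c₂ ≤ n := by
          have h1 : Nf c₁ c₂ ≤ s.sup (fun c₂ => Nf c₁ c₂) := Finset.le_sup hc₂s
          have h2 : s.sup (fun c₂ => Nf c₁ c₂) ≤ m₁ :=
            Finset.le_sup (f := fun c => s.sup (fun c₂ => Nf c c₂)) hc₁s
          have h3 : m₁ ≤ m := le_max_left _ _
          omega
        obtain ⟨v, ⟨u, huU, huv⟩, hvV⟩ := hNf c₁ c₂ n hNle (thIterZ θ (b i) ω)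
        have huv' : fIterH θ F (thIterZ θ (b i) ω) n u = v := huv
        -- first gluing: u glued to the current orbit endpoint
        have hduq : dist u (fIterZ θ F ω (b i) x) < δ := by
          have h1 : dist u c₁ < δ/4 := Metric.mem_ball.mp huU
          have h2 : dist (fIterZ θ F ω (b i) x) c₁ < δ/4 := Metric.mem_ball.mp hc₁
          calc dist u (fIterZ θ F ω (b i) x) ≤ dist u c₁ + dist c₁ (fIterZ θ F ω (b i) x) :=
                dist_triangle _ _ _
            _ < δ := by rw [dist_comm c₁]; linarith
        obtain ⟨w, hwWs, hwWu⟩ := (hδ (thIterZ θ (b i) ω) u (fIterZ θ F ω (b i) x) hduq).exists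
        -- the image w' of w is close to the start of the next segment
        have hww : dist u w ≤ β := by
          have := hwWs 0
          simpa [fIterH] using this
        have hexpn : Real.exp (-(n : ℝ) * lam) ≤ q := by
          rw [hq]
          apply Real.exp_le_exp.mpr
          have : (m : ℝ) ≤ (n : ℝ) := by exact_mod_cast hmn.le
          nlinarith [hlam.le]
        have hdvw' : dist v (fIterH θ F (thIterZ θ (b i) ω) n w) ≤ q * β := by
          have h1 := H1s β hβpos hβε₀ (thIterZ θ (b i) ω) u w hwWs n
          calc dist v (fIterH θ F (thIterZ θ (b i) ω) n w)
              = dist (fIterH θ F (thIterZ θ (b i) ω) n u) (fIterH θ F (thIterZ θ (b i) ω) n w) := by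
                rw [← huv']
            _ ≤ Real.exp (-(n : ℝ) * lam) * dist u w := h1
            _ ≤ q * β := mul_le_mul hexpn hww dist_nonneg hqpos.le
        have hdpw' : dist (Pω (a (i + 1))) (fIterH θ F (thIterZ θ (b i) ω) n w) < δ := by
          have h1 : dist (Pω (a (i + 1))) c₂ < δ/4 := Metric.mem_ball.mp hc₂
          have h2 : dist v c₂ < δ/4 := Metric.mem_ball.mp hvV
          have h3 := dist_triangle4 (Pω (a (i + 1))) c₂ v (fIterH θ F (thIterZ θ (b i) ω) n w)
          rw [dist_comm c₂ v] at h3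
          linarith
        -- second gluing
        obtain ⟨z, hzWs, hzWu⟩ :=
          (hδ (thIterZ θ (a (i + 1)) ω) (Pω (a (i + 1)))
            (fIterH θ F (thIterZ θ (b i) ω) n w) hdpw').exists
        have hx't : ∀ t : ℤ,
            fIterZ θ F ω t ((fIterZ θ F ω (a (i + 1))).symm z)
              = fIterZ θ F (thIterZ θ (a (i + 1)) ω) (t - a (i + 1)) z := by
          intro t
          have h := fIterZ_cocycle θ F ω (a (i + 1)) (t - a (i + 1))
            ((fIterZ θ F ω (a (i + 1))).symm z)
          rw [show a (i + 1) + (t - a (i + 1)) = t by ring,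
            Homeomorph.apply_symm_apply] at h
          exact h
        refine ⟨(fIterZ θ F ω (a (i + 1))).symm z, ?_⟩
        intro i' hi' t ht1 ht2
        rcases Nat.lt_or_ge i' (i + 1) with hlt | hge
        · -- old segments
          have hi'i : i' ≤ i := by omega
          have hgap1 : (m : ℤ) * ((i - i' : ℕ) : ℤ) ≤ b i - b i' := by
            have := hgap i' (i - i') (by omega)
            rw [show i' + (i - i') = i by omega] at this
            exact this
          have hmul_nonneg : (0 : ℤ) ≤ (m : ℤ) * ((i - i' : ℕ) : ℤ) := by positivity
          have htB : t ≤ b i := by omega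
          -- T1: induction bound
          have T1 := hx i' hi'i t ht1 ht2
          -- T2: first gluing error
          have hnnz : (((b i - t).toNat : ℕ) : ℤ) = b i - t := Int.toNat_of_nonneg (by omega)
          set nn : ℕ := (b i - t).toNat with hnn
          have hxT : fIterZ θ F ω t x = fIterZ θ F (thIterZ θ (b i) ω) (t - b i)
              (fIterZ θ F ω (b i) x) := by
            have h := fIterZ_cocycle θ F ω (b i) (t - b i) x
            rw [show b i + (t - b i) = t by ring] at h
            exact h
          have hq0w : dist (fIterZ θ F ω (b i) x) w ≤ β := by
            have := hwWu 0
            simpa [fIterZ_zero] using this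
          have T2 : dist (fIterZ θ F (thIterZ θ (b i) ω) (t - b i) (fIterZ θ F ω (b i) x))
              (fIterZ θ F (thIterZ θ (b i) ω) (t - b i) w)
              ≤ Real.exp (-(nn : ℝ) * lam) * β := by
            have h := H1u β hβpos hβε₀ (thIterZ θ (b i) ω) (fIterZ θ F ω (b i) x) w hwWu nn
            rw [show -((nn : ℕ) : ℤ) = t - b i by omega] at h
            exact le_trans h (mul_le_mul_of_nonneg_left hq0w (Real.exp_nonneg _))
          -- T3: second gluing error
          have hmmz : (((a (i + 1) - t).toNat : ℕ) : ℤ) = a (i + 1) - t :=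
            Int.toNat_of_nonneg (by omega)
          set mm : ℕ := (a (i + 1) - t).toNat with hmm
          have hw'z : fIterZ θ F (thIterZ θ (b i) ω) (t - b i) w
              = fIterZ θ F (thIterZ θ (a (i + 1)) ω) (t - a (i + 1))
                  (fIterH θ F (thIterZ θ (b i) ω) n w) := by
            have h := fIterZ_cocycle θ F (thIterZ θ (b i) ω) (n : ℤ) (t - a (i + 1)) w
            rw [show (n : ℤ) + (t - a (i + 1)) = t - b i by omega] at h
            have hth : thIterZ θ (n : ℤ) (thIterZ θ (b i) ω) = thIterZ θ (a (i + 1)) ω := by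
              rw [← thIterZ_add, show b i + (n : ℤ) = a (i + 1) by omega]
            rw [hth, fIterZ_coe] at h
            exact h
          have hw'zd : dist (fIterH θ F (thIterZ θ (b i) ω) n w) z ≤ β := by
            have := hzWu 0
            simpa [fIterZ_zero] using this
          have T3 : dist (fIterZ θ F (thIterZ θ (a (i + 1)) ω) (t - a (i + 1))
                (fIterH θ F (thIterZ θ (b i) ω) n w))
              (fIterZ θ F (thIterZ θ (a (i + 1)) ω) (t - a (i + 1)) z)
              ≤ Real.exp (-(mm : ℝ) * lam) * β := by
            have h := H1u β hβpos hβε₀ (thIterZ θ (a (i + 1)) ω)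
              (fIterH θ F (thIterZ θ (b i) ω) n w) z hzWu mm
            rw [show -((mm : ℕ) : ℤ) = t - a (i + 1) by omega] at h
            exact le_trans h (mul_le_mul_of_nonneg_left hw'zd (Real.exp_nonneg _))
          -- decay comparisons
          have hd1 : Real.exp (-(nn : ℝ) * lam) ≤ q ^ (i - i') := by
            apply hqpow
            rw [hnnz]
            linarith
          have hd2 : Real.exp (-(mm : ℝ) * lam) ≤ Real.exp (-(nn : ℝ) * lam) := by
            apply Real.exp_le_exp.mpr
            have hcast : (nn : ℝ) ≤ (mm : ℝ) := by
              exact_mod_cast (by omega : (nn : ℤ) ≤ (mm : ℤ))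
            nlinarith [mul_nonneg (sub_nonneg.mpr hcast) hlam.le]
          -- combine the three errors
          have htri := dist_triangle4 (Pω t) (fIterZ θ F ω t x)
            (fIterZ θ F (thIterZ θ (b i) ω) (t - b i) w)
            (fIterZ θ F ω t ((fIterZ θ F ω (a (i + 1))).symm z))
          have e2 : dist (fIterZ θ F ω t x)
              (fIterZ θ F (thIterZ θ (b i) ω) (t - b i) w) ≤ q ^ (i - i') * β := by
            rw [hxT]
            exact le_trans T2 (mul_le_mul_of_nonneg_right hd1 hβpos.le)
          have e3 : dist (fIterZ θ F (thIterZ θ (b i) ω) (t - b i) w)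
              (fIterZ θ F ω t ((fIterZ θ F ω (a (i + 1))).symm z)) ≤ q ^ (i - i') * β := by
            rw [hx't t, hw'z]
            exact le_trans T3 (le_trans (mul_le_mul_of_nonneg_right hd2 hβpos.le)
              (mul_le_mul_of_nonneg_right hd1 hβpos.le))
          have hpow : q ^ ((i + 1) - i') = q * q ^ (i - i') := by
            rw [show (i + 1) - i' = (i - i') + 1 by omega, pow_succ]
            ring
          have hQ : (0 : ℝ) ≤ q ^ (i - i') := (pow_pos hqpos _).le
          have hhalf : β * (q ^ (i - i')) * q ≤ β * (q ^ (i - i')) * (1/2) :=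
            mul_le_mul_of_nonneg_left hq12 (by positivity)
          rw [hpow]
          nlinarith [htri, T1, e2, e3, hhalf, hQ, hβpos.le, hqpos.le]
        · -- the new segment i+1
          have hi'eq : i' = i + 1 := by omega
          subst hi'eq
          have hs'z : (((t - a (i + 1)).toNat : ℕ) : ℤ) = t - a (i + 1) :=
            Int.toNat_of_nonneg (by omega)
          have hPt : fIterZ θ F (thIterZ θ (a (i + 1)) ω) (t - a (i + 1)) (Pω (a (i + 1)))
              = Pω t := horb (i + 1) hik (a (i + 1)) t le_rfl (hab (i + 1) hik) ht1 ht2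
          have hb : dist (Pω t)
              (fIterZ θ F ω t ((fIterZ θ F ω (a (i + 1))).symm z)) ≤ β := by
            rw [hx't t, ← hPt, ← hs'z, fIterZ_coe]
            exact hzWs ((t - a (i + 1)).toNat)
          have hq0 : q ^ ((i + 1) - (i + 1)) = 1 := by norm_num
          rw [hq0]
          linarith
  obtain ⟨x, hx⟩ := key (k - 1) (by omega)
  refine ⟨x, ?_⟩
  intro i hik t ht1 ht2
  have h := hx i (by omega) t ht1 ht2
  have hpowpos : 0 < q ^ ((k - 1) - i) := pow_pos hqpos _
  have : 0 < 4 * β * q ^ ((k - 1) - i) := by positivity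
  linarith


end Paper
end
end

section
/- Let P be a θ-invariant ergodic Borel probability measure on Ω, φ : Ω×M → ℝ continuous and α ∈ ℝ. Then K_{φ,α} is a Θ-invariant Borel subset of Ω×M, the set Ω_α := {ω ∈ Ω : K_{φ,α}(ω) ≠ ∅} is measurable with respect to the P-completion of the Borel σ-algebra of Ω, and either P(Ω_α) = 1 or P(Ω_α) = 0 (with P extended to its completion). -/
open Set Filter Topology MeasureTheory ENNReal NNReal

noncomputable section

namespace Paper

variable {Ω M : Type*} [MetricSpace Ω] [MetricSpace M]

/-- The skew product `Θ(ω,x) = (θω, F_ω x)`. -/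
def skewH (θ : Ω ≃ₜ Ω) (F : Ω → M ≃ₜ M) : Ω × M → Ω × M :=
  fun p => (θ p.1, F p.1 p.2)

/-- The level set of the Birkhoff average:
`K_{φ,α} = {(ω,x) : (1/n) Σ_{i<n} φ(Θ^i(ω,x)) → α}`. -/
def Kset (θ : Ω ≃ₜ Ω) (F : Ω → M ≃ₜ M) (φ : Ω × M → ℝ) (α : ℝ) : Set (Ω × M) :=
  {p | Tendsto (fun n : ℕ =>
    (∑ i ∈ Finset.range n, φ ((skewH θ F)^[i] p)) / (n : ℝ)) atTop (𝓝 α)}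

/-- Cesàro averages of a shifted sequence converge iff those of the sequence converge. -/
lemma tendsto_shift_iff {u : ℕ → ℝ} {α : ℝ} :
    Tendsto (fun n : ℕ => (∑ i ∈ Finset.range n, u (i + 1)) / (n : ℝ)) atTop (𝓝 α) ↔
    Tendsto (fun n : ℕ => (∑ i ∈ Finset.range n, u i) / (n : ℝ)) atTop (𝓝 α) := by
  set s : ℕ → ℝ := fun n => ∑ i ∈ Finset.range n, u i with hs
  have hkey : ∀ n : ℕ, (∑ i ∈ Finset.range n, u (i + 1)) = s (n + 1) - u 0 := by
    intro n
    rw [hs]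
    simp only [Finset.sum_range_succ' u n]
    ring
  constructor
  · intro h
    rw [← tendsto_add_atTop_iff_nat 1]
    have h2 : Tendsto (fun n : ℕ =>
        ((∑ i ∈ Finset.range n, u (i + 1)) / (n : ℝ)) * ((n : ℝ) / ((n : ℝ) + 1))
          + u 0 / ((n : ℝ) + 1)) atTop (𝓝 (α * 1 + 0)) := by
      refine Tendsto.add (h.mul (tendsto_natCast_div_add_atTop (1 : ℝ))) ?_
      have h3 := (tendsto_const_div_atTop_nhds_zero_nat (u 0)).comp
        (tendsto_add_atTop_nat 1)
      exact h3.congr (fun n => by push_cast [Function.comp]; ring_nf)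
    rw [mul_one, add_zero] at h2
    refine h2.congr' ?_
    filter_upwards [eventually_ge_atTop 1] with n hn
    have hn' : (n : ℝ) ≠ 0 := Nat.cast_ne_zero.mpr (by omega)
    have hn1 : (n : ℝ) + 1 ≠ 0 := by positivity
    rw [hkey n]
    push_cast
    field_simp
    simp [hs]
  · intro h
    have h1 : Tendsto (fun n : ℕ => s (n + 1) / ((n : ℝ) + 1)) atTop (𝓝 α) := by
      have h0 := (tendsto_add_atTop_iff_nat 1).mpr h
      exact h0.congr (fun n => by push_cast; simp only [hs])
    have hrat : Tendsto (fun n : ℕ => ((n : ℝ) + 1) / (n : ℝ)) atTop (𝓝 1) := by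
      have h4 : Tendsto (fun n : ℕ => 1 + 1 / (n : ℝ)) atTop (𝓝 (1 + 0)) :=
        tendsto_const_nhds.add tendsto_one_div_atTop_nhds_zero_nat
      rw [add_zero] at h4
      refine h4.congr' ?_
      filter_upwards [eventually_ge_atTop 1] with n hn
      have hn' : (n : ℝ) ≠ 0 := Nat.cast_ne_zero.mpr (by omega)
      field_simp
    have h2 : Tendsto (fun n : ℕ =>
        s (n + 1) / ((n : ℝ) + 1) * (((n : ℝ) + 1) / (n : ℝ)) - u 0 / (n : ℝ))
        atTop (𝓝 (α * 1 - 0)) :=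
      Tendsto.sub (h1.mul hrat) (tendsto_const_div_atTop_nhds_zero_nat (u 0))
    rw [mul_one, sub_zero] at h2
    refine h2.congr' ?_
    filter_upwards [eventually_ge_atTop 1] with n hn
    have hn' : (n : ℝ) ≠ 0 := Nat.cast_ne_zero.mpr (by omega)
    have hn1 : (n : ℝ) + 1 ≠ 0 := by positivity
    rw [hkey n]
    field_simp

/-- If an open set contains the "box" `{x | ∀ i, x i ≤ τ i}` in `ℕ → ℕ`, it contains a
finite-dimensional box. -/
lemma exists_finbox_subset {τ : ℕ → ℕ} {V : Set (ℕ → ℕ)} (hV : IsOpen V)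
    (hLV : {x : ℕ → ℕ | ∀ i, x i ≤ τ i} ⊆ V) :
    ∃ k : ℕ, {x : ℕ → ℕ | ∀ i < k, x i ≤ τ i} ⊆ V := by
  set L : Set (ℕ → ℕ) := Set.univ.pi fun i => Iic (τ i) with hLdef
  have hLeq : ∀ y : ℕ → ℕ, y ∈ L ↔ ∀ i, y i ≤ τ i := by
    intro y
    simp [hLdef, Set.mem_pi, Pi.le_def]
  have hLcomp : IsCompact L := isCompact_univ_pi fun i => (Set.finite_Iic (τ i)).isCompact
  have hn0 : ∀ y : ℕ → ℕ, ∃ n : ℕ, y ∈ L → PiNat.cylinder y n ⊆ V := by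
    intro y
    by_cases hy : y ∈ L
    · obtain ⟨v, ⟨z, n, rfl⟩, hyv, hvV⟩ :=
        (PiNat.isTopologicalBasis_cylinders (fun _ : ℕ => ℕ)).exists_subset_of_mem_open
          (hLV ((hLeq y).mp hy)) hV
      refine ⟨n, fun _ w hw => hvV ?_⟩
      show ∀ i, i < n → w i = z i
      intro i hi
      have hw' : w i = y i := hw i hi
      have hy' : y i = z i := hyv i hi
      rw [hw', hy']
    · exact ⟨0, fun h => absurd h hy⟩
  choose n hn using hn0
  have hcover : L ⊆ ⋃ y ∈ L, PiNat.cylinder y (n y) := fun y hy =>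
    mem_biUnion hy (show ∀ i, i < n y → y i = y i from fun i _ => rfl)
  obtain ⟨t, htL, htfin, htcov⟩ := hLcomp.elim_finite_subcover_image
    (fun y (_ : y ∈ L) => PiNat.isOpen_cylinder _ y (n y)) hcover
  refine ⟨htfin.toFinset.sup n, fun x hx => ?_⟩
  have hr : (fun i => min (x i) (τ i)) ∈ L := (hLeq _).mpr fun i => min_le_right _ _
  obtain ⟨y, hyt, hycyl⟩ : ∃ y ∈ t, (fun i => min (x i) (τ i)) ∈ PiNat.cylinder y (n y) := by
    simpa using htcov hr
  refine hn y (htL hyt) ?_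
  show ∀ i, i < n y → x i = y i
  intro i hi
  have hiK : i < htfin.toFinset.sup n :=
    lt_of_lt_of_le hi (Finset.le_sup (htfin.mem_toFinset.mpr hyt))
  have hmin : min (x i) (τ i) = y i := hycyl i hi
  rw [← hmin]
  exact (min_eq_left (hx i hiK)).symm

/-- Capacitability: an analytic set in a compact metric space is null measurable for any
finite Borel measure. -/
lemma AnalyticSet.nullMeasurableSet' {X : Type*} [MetricSpace X] [CompactSpace X]
    [MeasurableSpace X] [BorelSpace X] (μ : Measure X) [IsFiniteMeasure μ]
    {s : Set X} (hs : MeasureTheory.AnalyticSet s) : NullMeasurableSet s μ := by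
  rw [MeasureTheory.AnalyticSet_def] at hs
  rcases hs with rfl | ⟨f, hf, rfl⟩
  · exact MeasurableSet.empty.nullMeasurableSet
  -- Key inner approximation by compact sets.
  have key : ∀ r : ℝ≥0∞, r < μ (range f) →
      ∃ K : Set X, IsCompact K ∧ K ⊆ range f ∧ r ≤ μ K := by
    intro r hr
    have step : ∀ (τ : ℕ → ℕ) (k : ℕ), r < μ (f '' {x | ∀ i < k, x i ≤ τ i}) →
        ∃ m, r < μ (f '' {x | ∀ i < k + 1, x i ≤ Function.update τ k m i}) := by
      intro τ k hk
      have hmono : Monotone (fun m : ℕ => f '' {x | (∀ i < k, x i ≤ τ i) ∧ x k ≤ m}) := by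
        intro a b hab
        exact image_mono (fun x hx => ⟨hx.1, hx.2.trans hab⟩)
      have hun2 : (⋃ m, {x : ℕ → ℕ | (∀ i < k, x i ≤ τ i) ∧ x k ≤ m})
          = {x | ∀ i < k, x i ≤ τ i} := by
        ext x
        exact ⟨fun hx => by obtain ⟨m, hm⟩ := mem_iUnion.mp hx; exact hm.1,
          fun h => mem_iUnion.mpr ⟨x k, h, le_rfl⟩⟩
      have hun : (⋃ m, f '' {x | (∀ i < k, x i ≤ τ i) ∧ x k ≤ m})
          = f '' {x | ∀ i < k, x i ≤ τ i} := by
        rw [← image_iUnion, hun2]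
      have hsup : μ (f '' {x | ∀ i < k, x i ≤ τ i})
          = ⨆ m, μ (f '' {x | (∀ i < k, x i ≤ τ i) ∧ x k ≤ m}) := by
        rw [← hun]
        exact hmono.directed_le.measure_iUnion
      rw [hsup] at hk
      obtain ⟨m, hm⟩ := lt_iSup_iff.mp hk
      refine ⟨m, ?_⟩
      have hset : {x : ℕ → ℕ | ∀ i < k + 1, x i ≤ Function.update τ k m i}
          = {x | (∀ i < k, x i ≤ τ i) ∧ x k ≤ m} := by
        ext x
        constructor
        · intro h
          refine ⟨fun i hi => ?_, ?_⟩
          · have h2 := h i (by omega)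
            rwa [Function.update_of_ne (by omega)] at h2
          · have h2 := h k (by omega)
            rwa [Function.update_self] at h2
        · rintro ⟨h1, h2⟩ i hi
          rcases Nat.lt_succ_iff_lt_or_eq.mp hi with h | rfl
          · rw [Function.update_of_ne (by omega)]
            exact h1 i h
          · rwa [Function.update_self]
      rw [hset]
      exact hm
    choose! Mf hMf using step
    set g : ℕ → ℕ → ℕ :=
      fun k => Nat.rec (fun _ => 0) (fun k gk => Function.update gk k (Mf gk k)) k with hgdef
    have hgQ : ∀ k, r < μ (f '' {x | ∀ i < k, x i ≤ g k i}) := by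
      intro k
      induction k with
      | zero =>
        have h0 : {x : ℕ → ℕ | ∀ i < 0, x i ≤ g 0 i} = univ := by
          ext x; simp
        rw [h0, image_univ]
        exact hr
      | succ k ih => exact hMf (g k) k ih
    set τ : ℕ → ℕ := fun i => g (i + 1) i with hτdef
    have hagree : ∀ k, ∀ i < k, g k i = τ i := by
      intro k
      induction k with
      | zero => omega
      | succ k ih =>
        intro i hi
        rcases Nat.lt_succ_iff_lt_or_eq.mp hi with h | rfl
        · show Function.update (g k) k (Mf (g k) k) i = τ i
          rw [Function.update_of_ne (by omega)]
          exact ih i h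
        · rfl
    have hQτ : ∀ k, r < μ (f '' {x | ∀ i < k, x i ≤ τ i}) := by
      intro k
      have hset : {x : ℕ → ℕ | ∀ i < k, x i ≤ τ i} = {x | ∀ i < k, x i ≤ g k i} := by
        ext x
        exact forall₂_congr fun i hi => by rw [hagree k i hi]
      rw [hset]
      exact hgQ k
    refine ⟨f '' (Set.univ.pi fun i => Iic (τ i)),
      ((isCompact_univ_pi fun i => (Set.finite_Iic (τ i)).isCompact).image hf),
      image_subset_range _ _, ?_⟩
    rw [Set.measure_eq_iInf_isOpen]
    refine le_iInf fun U => le_iInf fun hKU => le_iInf fun hU => ?_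
    have hLV : {x : ℕ → ℕ | ∀ i, x i ≤ τ i} ⊆ f ⁻¹' U := by
      intro x hx
      exact hKU (mem_image_of_mem f (by simpa [Set.mem_pi, Pi.le_def] using hx))
    obtain ⟨k, hk⟩ := exists_finbox_subset (hU.preimage hf) hLV
    exact le_trans (hQτ k).le (measure_mono (image_subset_iff.mpr hk))
  rcases eq_or_ne (μ (range f)) 0 with h0 | h0
  · exact NullMeasurableSet.of_null h0
  have hK : ∀ n : ℕ, ∃ K : Set X, IsCompact K ∧ K ⊆ range f ∧
      μ (range f) - ((n : ℝ≥0∞))⁻¹ ≤ μ K := by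
    intro n
    exact key _ (ENNReal.sub_lt_self (measure_ne_top μ _) h0
      (ENNReal.inv_ne_zero.mpr (ENNReal.natCast_ne_top n)))
  choose K hKc hKs hKm using hK
  set T := ⋃ n, K n with hTdef
  have hTmeas : MeasurableSet T := MeasurableSet.iUnion fun n => (hKc n).measurableSet
  have hTs : T ⊆ range f := iUnion_subset hKs
  have hle : μ (range f) ≤ μ T := by
    refine ENNReal.le_of_forall_pos_le_add fun ε hε _ => ?_
    obtain ⟨n, hn⟩ := ENNReal.exists_inv_nat_lt
      (show (ε : ℝ≥0∞) ≠ 0 by exact_mod_cast hε.ne')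
    calc μ (range f) ≤ μ (range f) - ((n : ℝ≥0∞))⁻¹ + ((n : ℝ≥0∞))⁻¹ := le_tsub_add
      _ ≤ μ (K n) + (ε : ℝ≥0∞) := add_le_add (hKm n) hn.le
      _ ≤ μ T + (ε : ℝ≥0∞) := add_le_add_left (measure_mono (subset_iUnion K n)) _
  have hnull : μ (range f \ T) = 0 := by
    have h1 : μ (toMeasurable μ (range f) \ T) = μ (toMeasurable μ (range f)) - μ T :=
      measure_diff (hTs.trans (subset_toMeasurable μ _)) hTmeas.nullMeasurableSet
        (measure_ne_top μ T)
    refine measure_mono_null (diff_subset_diff_left (subset_toMeasurable μ _)) ?_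
    rw [h1, measure_toMeasurable]
    exact tsub_eq_zero_of_le hle
  have hEq : range f = T ∪ (range f \ T) := (union_diff_cancel hTs).symm
  rw [hEq]
  exact hTmeas.nullMeasurableSet.union (NullMeasurableSet.of_null hnull)

/-- `K_{φ,α}` is a `Θ`-invariant Borel set, the set
`Ω_α = {ω : K_{φ,α}(ω) ≠ ∅}` is measurable for the `P`-completion of the Borel
σ-algebra, and `P(Ω_α) = 1` or `P(Ω_α) = 0`. -/
theorem level_set_invariant_and_zero_one
    [CompactSpace Ω] [CompactSpace M]
    [MeasurableSpace Ω] [BorelSpace Ω] [MeasurableSpace M] [BorelSpace M]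
    (θ : Ω ≃ₜ Ω) (F : Ω → M ≃ₜ M)
    (hF : Continuous fun p : Ω × M => F p.1 p.2)
    (P : Measure Ω) [IsProbabilityMeasure P]
    -- P is θ-invariant
    (hPinv : Measure.map (⇑θ) P = P)
    -- P is ergodic for θ
    (hPerg : ∀ A : Set Ω, MeasurableSet A → (⇑θ) ⁻¹' A = A → P A = 0 ∨ P A = 1)
    (φ : Ω × M → ℝ) (hφ : Continuous φ) (α : ℝ) :
    skewH θ F ⁻¹' Kset θ F φ α = Kset θ F φ α ∧
    MeasurableSet (Kset θ F φ α) ∧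
    NullMeasurableSet {ω : Ω | ∃ x : M, (ω, x) ∈ Kset θ F φ α} P ∧
    (P {ω : Ω | ∃ x : M, (ω, x) ∈ Kset θ F φ α} = 1 ∨
      P {ω : Ω | ∃ x : M, (ω, x) ∈ Kset θ F φ α} = 0) := by
  have hΘc : Continuous (skewH θ F) := (θ.continuous.comp continuous_fst).prodMk hF
  -- Part 1: invariance of the level set.
  have hinv : skewH θ F ⁻¹' Kset θ F φ α = Kset θ F φ α := by
    ext p
    simp only [mem_preimage, Kset, mem_setOf_eq]
    have hfun : (fun n : ℕ =>
        (∑ i ∈ Finset.range n, φ ((skewH θ F)^[i] (skewH θ F p))) / (n : ℝ))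
        = fun n : ℕ =>
        (∑ i ∈ Finset.range n, (fun j => φ ((skewH θ F)^[j] p)) (i + 1)) / (n : ℝ) := by
      funext n
      congr 1
    rw [hfun]
    exact tendsto_shift_iff (u := fun j => φ ((skewH θ F)^[j] p))
  -- Part 2: measurability of the level set.
  have hKmeas : MeasurableSet (Kset θ F φ α) := by
    refine measurableSet_tendsto (𝓝 α)
      (f := fun (n : ℕ) (p : Ω × M) =>
        (∑ i ∈ Finset.range n, φ ((skewH θ F)^[i] p)) / (n : ℝ)) (fun n => ?_)
    exact ((continuous_finset_sum _ fun i _ => hφ.comp (hΘc.iterate i)).div_const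
      (n : ℝ)).measurable
  refine ⟨hinv, hKmeas, ?_⟩
  set S := {ω : Ω | ∃ x : M, (ω, x) ∈ Kset θ F φ α} with hSdef
  -- invariance of S
  have hSinv : (⇑θ) ⁻¹' S = S := by
    ext ω
    simp only [mem_preimage, hSdef, mem_setOf_eq]
    constructor
    · rintro ⟨x, hx⟩
      refine ⟨(F ω).symm x, ?_⟩
      have h1 : (ω, (F ω).symm x) ∈ skewH θ F ⁻¹' Kset θ F φ α := by
        rw [mem_preimage]
        have h2 : skewH θ F (ω, (F ω).symm x) = (θ ω, x) := by
          simp [skewH]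
        rw [h2]
        exact hx
      rwa [hinv] at h1
    · rintro ⟨x, hx⟩
      refine ⟨F ω x, ?_⟩
      rw [← hinv] at hx
      exact hx
  -- null measurability of S via analytic sets
  have hSnm : NullMeasurableSet S P := by
    have hproj : S = Prod.fst '' Kset θ F φ α := by
      ext ω
      constructor
      · rintro ⟨x, hx⟩
        exact ⟨(ω, x), hx, rfl⟩
      · rintro ⟨⟨a, b⟩, h, rfl⟩
        exact ⟨b, h⟩
    rw [hproj]
    exact AnalyticSet.nullMeasurableSet' P
      (hKmeas.analyticSet.image_of_continuous continuous_fst)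
  refine ⟨hSnm, ?_⟩
  -- ergodicity: zero-one law
  have hErg : Ergodic (⇑θ) P :=
    ⟨⟨θ.continuous.measurable, hPinv⟩, ⟨fun s hs hs' => by
      rw [Filter.eventuallyConst_set']
      rcases hPerg s hs hs' with h | h
      · exact Or.inl (ae_eq_empty.mpr h)
      · exact Or.inr (ae_eq_univ.mpr ((prob_compl_eq_zero_iff hs).mpr h))⟩⟩
  have hae : (⇑θ) ⁻¹' S =ᵐ[P] S := by
    rw [hSinv]
    exact EventuallyEq.rfl
  rcases hErg.quasiErgodic.ae_empty_or_univ₀ hSnm hae with h | h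
  · right
    rw [measure_congr h]
    exact measure_empty
  · left
    rw [measure_congr h]
    exact measure_univ

end Paper
end
end

section
/- Let X be a compact metric space, T : X → X continuous, φ : X → ℝ continuous and α ∈ ℝ. Let (σ_k) be a sequence of Borel probability measures on X, (n_k) natural numbers with n_k → ∞, and (δ_k) positive reals with δ_k → 0, such that each σ_k gives full measure to the set {x ∈ X : |(1/n_k) Σ_{i=0}^{n_k−1} φ(T^i x) − α| ≤ δ_k}. If the measures μ_k := (1/n_k) Σ_{i=0}^{n_k−1} (T^i)_* σ_k converge to μ in the weak* topology, then μ is a T-invariant Borel probability measure and ∫_X φ dμ = α. -/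
open Set Filter Topology MeasureTheory ENNReal NNReal

noncomputable section

namespace Paper

/-- if the empirical measures `μ_k = (1/n_k) Σ_{i<n_k} (T^i)_* σ_k`,
where each `σ_k` gives full measure to points whose Birkhoff average of `φ` up to
time `n_k` is `δ_k`-close to `α`, converge weak* to `μ`, then `μ` is a `T`-invariant
Borel probability measure with `∫ φ dμ = α`. -/
theorem limit_of_empirical_measures
    {X : Type*} [MetricSpace X] [CompactSpace X] [MeasurableSpace X] [BorelSpace X]
    (T : X → X) (hT : Continuous T)
    (φ : X → ℝ) (hφ : Continuous φ) (α : ℝ)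
    (σ : ℕ → Measure X) (hσ : ∀ k, IsProbabilityMeasure (σ k))
    (n : ℕ → ℕ) (hn : Tendsto n atTop atTop)
    (δ : ℕ → ℝ) (hδpos : ∀ k, 0 < δ k) (hδ : Tendsto δ atTop (𝓝 0))
    -- σ_k gives full measure to the deviation set
    (hfull : ∀ k, σ k {x : X |
      |(∑ i ∈ Finset.range (n k), φ (T^[i] x)) / (n k : ℝ) - α| ≤ δ k} = 1)
    (μ : Measure X)
    -- weak* convergence of μ_k = (1/n_k) Σ_{i<n_k} (T^i)_* σ_k to μ:
    -- ∫ g dμ_k → ∫ g dμ for every continuous g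
    (hconv : ∀ g : X → ℝ, Continuous g →
      Tendsto (fun k =>
        (∑ i ∈ Finset.range (n k), ∫ x, g (T^[i] x) ∂(σ k)) / (n k : ℝ))
        atTop (𝓝 (∫ x, g x ∂μ))) :
    IsProbabilityMeasure μ ∧ Measure.map T μ = μ ∧ (∫ x, φ x ∂μ) = α := by
  have hnpos : ∀ᶠ k in atTop, 0 < n k := hn.eventually_gt_atTop 0
  -- integrability of continuous functions w.r.t. finite measures on the compact space X
  have hint : ∀ (g : X → ℝ), Continuous g → ∀ (ν : Measure X), IsFiniteMeasure ν →
      Integrable g ν := by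
    intro g hg ν hν
    exact (BoundedContinuousFunction.mkOfCompact ⟨g, hg⟩).integrable ν
  -- Step 1: μ is a probability measure
  have h1 := hconv (fun _ => (1 : ℝ)) continuous_const
  have heq : ∀ᶠ k in atTop,
      (∑ i ∈ Finset.range (n k), ∫ _x, (1 : ℝ) ∂(σ k)) / (n k : ℝ) = 1 := by
    filter_upwards [hnpos] with k hk
    have : IsProbabilityMeasure (σ k) := hσ k
    have hnk : (n k : ℝ) ≠ 0 := Nat.cast_ne_zero.mpr hk.ne'
    simp [integral_const, measure_univ, hnk]
  have hμ1 : (∫ _x, (1 : ℝ) ∂μ) = 1 :=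
    tendsto_nhds_unique h1 ((tendsto_congr' heq).mpr tendsto_const_nhds)
  have hμuniv : μ univ = 1 := by
    rw [integral_const, smul_eq_mul, mul_one] at hμ1
    exact (ENNReal.toReal_eq_one_iff _).mp hμ1
  have hprob : IsProbabilityMeasure μ := ⟨hμuniv⟩
  -- Step 2: T-invariance at the level of integrals of continuous functions
  have hinv : ∀ (g : X → ℝ), Continuous g → ∫ x, g (T x) ∂μ = ∫ x, g x ∂μ := by
    intro g hg
    set C := ‖BoundedContinuousFunction.mkOfCompact ⟨g, hg⟩‖ with hC
    have hgC : ∀ x, ‖g x‖ ≤ C := fun x =>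
      (BoundedContinuousFunction.mkOfCompact ⟨g, hg⟩).norm_coe_le_norm x
    have hA := hconv g hg
    have hB := hconv (fun x => g (T x)) (hg.comp hT)
    simp only [← Function.iterate_succ_apply'] at hB
    -- the difference of the two sequences
    have hdiff : Tendsto (fun k =>
        (∑ i ∈ Finset.range (n k), ∫ x, g (T^[i + 1] x) ∂(σ k)) / (n k : ℝ) -
        (∑ i ∈ Finset.range (n k), ∫ x, g (T^[i] x) ∂(σ k)) / (n k : ℝ))
        atTop (𝓝 ((∫ x, g (T x) ∂μ) - ∫ x, g x ∂μ)) := hB.sub hA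
    have hdiff0 : Tendsto (fun k =>
        (∑ i ∈ Finset.range (n k), ∫ x, g (T^[i + 1] x) ∂(σ k)) / (n k : ℝ) -
        (∑ i ∈ Finset.range (n k), ∫ x, g (T^[i] x) ∂(σ k)) / (n k : ℝ))
        atTop (𝓝 0) := by
      have key : ∀ k,
          (∑ i ∈ Finset.range (n k), ∫ x, g (T^[i + 1] x) ∂(σ k)) / (n k : ℝ) -
          (∑ i ∈ Finset.range (n k), ∫ x, g (T^[i] x) ∂(σ k)) / (n k : ℝ) =
          ((∫ x, g (T^[n k] x) ∂(σ k)) - ∫ x, g (T^[0] x) ∂(σ k)) / (n k : ℝ) := by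
        intro k
        rw [div_sub_div_same, ← Finset.sum_sub_distrib,
          Finset.sum_range_sub (fun i => ∫ x, g (T^[i] x) ∂(σ k))]
      simp only [key]
      apply squeeze_zero_norm' ?_
        (show Tendsto (fun k => (2 * C) / (n k : ℝ)) atTop (𝓝 0) from
          tendsto_const_nhds.div_atTop (tendsto_natCast_atTop_atTop.comp hn))
      filter_upwards [hnpos] with k hk
      have : IsProbabilityMeasure (σ k) := hσ k
      have hb : ∀ m : ℕ, ‖∫ x, g (T^[m] x) ∂(σ k)‖ ≤ C := by
        intro m
        calc ‖∫ x, g (T^[m] x) ∂(σ k)‖ ≤ C * ((σ k) univ).toReal :=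
              norm_integral_le_of_norm_le_const (Eventually.of_forall fun x => hgC _)
          _ = C := by simp [measure_univ]
      rw [norm_div, Real.norm_natCast]
      have hnk : (0 : ℝ) < (n k : ℝ) := Nat.cast_pos.mpr hk
      rw [div_le_div_iff_of_pos_right hnk]
      exact (norm_sub_le _ _).trans (by have h1 := hb (n k); have h2 := hb 0; linarith)
    have := tendsto_nhds_unique hdiff hdiff0
    linarith [this]
  -- map T μ = μ
  have hmap : Measure.map T μ = μ := by
    have : IsProbabilityMeasure (Measure.map T μ) :=
      Measure.isProbabilityMeasure_map hT.measurable.aemeasurable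
    apply ext_of_forall_lintegral_eq_of_IsFiniteMeasure
    intro f
    have hfc : Continuous fun x => (f x : ℝ) := NNReal.continuous_coe.comp f.continuous
    have hfm : Measurable fun x => (f x : ℝ≥0∞) :=
      (ENNReal.continuous_coe.comp f.continuous).measurable
    rw [lintegral_map hfm hT.measurable]
    rw [lintegral_coe_eq_integral _ (hint _ (hfc.comp hT) μ inferInstance),
      lintegral_coe_eq_integral _ (hint _ hfc μ inferInstance)]
    rw [hinv _ hfc]
  refine ⟨hprob, hmap, ?_⟩
  -- Step 3: ∫ φ dμ = α
  have hφc := hconv φ hφ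
  have hclose : ∀ᶠ k in atTop,
      ‖(∑ i ∈ Finset.range (n k), ∫ x, φ (T^[i] x) ∂(σ k)) / (n k : ℝ) - α‖ ≤ δ k := by
    filter_upwards [hnpos] with k hk
    have : IsProbabilityMeasure (σ k) := hσ k
    have hnk : (n k : ℝ) ≠ 0 := Nat.cast_ne_zero.mpr hk.ne'
    -- swap sum and integral
    have hswap : (∑ i ∈ Finset.range (n k), ∫ x, φ (T^[i] x) ∂(σ k)) =
        ∫ x, (∑ i ∈ Finset.range (n k), φ (T^[i] x)) ∂(σ k) := by
      rw [integral_finset_sum]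
      intro i _
      exact hint _ (hφ.comp (hT.iterate i)) _ inferInstance
    have hS : Continuous fun x => (∑ i ∈ Finset.range (n k), φ (T^[i] x)) / (n k : ℝ) - α :=
      ((continuous_finset_sum _ fun i _ => hφ.comp (hT.iterate i)).div_const _).sub
        continuous_const
    have hae : ∀ᵐ x ∂(σ k),
        ‖(∑ i ∈ Finset.range (n k), φ (T^[i] x)) / (n k : ℝ) - α‖ ≤ δ k := by
      have hs : MeasurableSet {x : X |
          |(∑ i ∈ Finset.range (n k), φ (T^[i] x)) / (n k : ℝ) - α| ≤ δ k} :=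
        (isClosed_le (continuous_abs.comp hS) continuous_const).measurableSet
      have hc : σ k ({x : X |
          |(∑ i ∈ Finset.range (n k), φ (T^[i] x)) / (n k : ℝ) - α| ≤ δ k}ᶜ) = 0 := by
        rw [measure_compl hs (measure_ne_top _ _), hfull k, measure_univ, tsub_self]
      exact ae_iff.mpr (by simpa [Real.norm_eq_abs, compl_setOf, not_le] using hc)
    have hintS : Integrable (fun x =>
        (∑ i ∈ Finset.range (n k), φ (T^[i] x)) / (n k : ℝ) - α) (σ k) :=
      hint _ hS _ inferInstance
    calc ‖(∑ i ∈ Finset.range (n k), ∫ x, φ (T^[i] x) ∂(σ k)) / (n k : ℝ) - α‖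
        = ‖∫ x, ((∑ i ∈ Finset.range (n k), φ (T^[i] x)) / (n k : ℝ) - α) ∂(σ k)‖ := by
          have hSdiv : Continuous fun x =>
              (∑ i ∈ Finset.range (n k), φ (T^[i] x)) / (n k : ℝ) :=
            (continuous_finset_sum _ fun i _ => hφ.comp (hT.iterate i)).div_const _
          rw [integral_sub (hint _ hSdiv _ inferInstance) (integrable_const α),
            integral_div, ← hswap, integral_const]
          simp [measure_univ]
      _ ≤ δ k * ((σ k) univ).toReal := norm_integral_le_of_norm_le_const hae
      _ = δ k := by simp [measure_univ]
  have hαlim : Tendsto (fun k =>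
      (∑ i ∈ Finset.range (n k), ∫ x, φ (T^[i] x) ∂(σ k)) / (n k : ℝ)) atTop (𝓝 α) := by
    rw [tendsto_iff_norm_sub_tendsto_zero]
    exact squeeze_zero' (Eventually.of_forall fun k => norm_nonneg _) hclose hδ
  exact tendsto_nhds_unique hφc hαlim

end Paper
end
end

section
/- Let Ω = AddCircle 1, M = AddCircle 1 × AddCircle 1 the unit 2-torus, α ∈ ℝ irrational, T : M → M an additive group automorphism that is a homeomorphism, and h : Ω → M continuous. Then the skew product Θ : Ω × M → Ω × M, Θ(ω,x) = (ω + α, T(x) + h(ω)), does not have the (classical) specification property. -/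
open Set Filter Topology MeasureTheory ENNReal NNReal

noncomputable section

namespace Paper

/-- The classical specification property of a map `g`, with respect to a distance
function `d` on `X`: for every `ε > 0` there is a gap `m` such that any finite family
of orbit segments, with consecutive time intervals spaced by more than `m`, is
`ε`-shadowed by the orbit of a single point. -/
def ClassicalSpecification {X : Type*} (d : X → X → ℝ) (g : X → X) : Prop :=
  ∀ ε : ℝ, 0 < ε → ∃ m : ℕ, ∀ k : ℕ, 1 ≤ k → ∀ (y : ℕ → X) (a b : ℕ → ℕ),
    (∀ i, 1 ≤ i → i ≤ k → a i ≤ b i) →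
    (∀ i, 1 ≤ i → i < k → b i + m < a (i + 1)) →
    ∃ z : X, ∀ i, 1 ≤ i → i ≤ k → ∀ j, a i ≤ j → j ≤ b i →
      d (g^[j] z) (g^[j - a i] (y i)) < ε

lemma iter_fst (α : ℝ)
    (T : (AddCircle (1 : ℝ) × AddCircle (1 : ℝ)) ≃+
         (AddCircle (1 : ℝ) × AddCircle (1 : ℝ)))
    (h : AddCircle (1 : ℝ) → AddCircle (1 : ℝ) × AddCircle (1 : ℝ)) :
    ∀ (n : ℕ) (z : AddCircle (1 : ℝ) × (AddCircle (1 : ℝ) × AddCircle (1 : ℝ))),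
      (((fun p => (p.1 + ((α : ℝ) : AddCircle (1 : ℝ)), T p.2 + h p.1))^[n] z)).1
        = z.1 + n • ((α : ℝ) : AddCircle (1 : ℝ)) := by
  intro n
  induction n with
  | zero => intro z; simp
  | succ n ih =>
    intro z
    rw [Function.iterate_succ_apply', ih]
    simp [succ_nsmul, add_assoc]

/-- the skew product `Θ(ω,x) = (ω + α, T x + h ω)` on
`𝕋 × 𝕋²` (with the sum metric on the product) does not have the classical
specification property. -/
theorem skew_product_no_specification
    (α : ℝ) (hα : Irrational α)
    (T : (AddCircle (1 : ℝ) × AddCircle (1 : ℝ)) ≃+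
         (AddCircle (1 : ℝ) × AddCircle (1 : ℝ)))
    (hT : Continuous ⇑T) (hTsymm : Continuous ⇑T.symm)
    (h : AddCircle (1 : ℝ) → AddCircle (1 : ℝ) × AddCircle (1 : ℝ))
    (hh : Continuous h) :
    ¬ ClassicalSpecification
        (fun p q : AddCircle (1 : ℝ) × (AddCircle (1 : ℝ) × AddCircle (1 : ℝ)) =>
          dist p.1 q.1 + dist p.2 q.2)
        (fun p => (p.1 + ((α : ℝ) : AddCircle (1 : ℝ)), T p.2 + h p.1)) := by
  intro hspec
  obtain ⟨m, hm⟩ := hspec (1/8) (by norm_num)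
  set c : AddCircle (1 : ℝ) := ((α : ℝ) : AddCircle (1 : ℝ)) with hc
  set w : AddCircle (1 : ℝ) := (((1:ℝ)/2 : ℝ) : AddCircle (1 : ℝ)) with hw
  -- two orbit segments
  set y : ℕ → AddCircle (1 : ℝ) × (AddCircle (1 : ℝ) × AddCircle (1 : ℝ)) :=
    fun i => if i = 1 then (0, 0) else ((m+1) • c + w, 0) with hy
  set a : ℕ → ℕ := fun i => if i = 1 then 0 else m + 1 with ha
  obtain ⟨z, hz⟩ := hm 2 (by norm_num) y a a
    (fun i _ _ => le_rfl)
    (by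
      intro i h1 h2
      interval_cases i
      simp [ha])
  have h1 := hz 1 le_rfl (by norm_num) 0 (by simp [ha]) (by simp [ha])
  have h2 := hz 2 (by norm_num) le_rfl (m+1) (by simp [ha]) (by simp [ha])
  simp only [ha, hy, if_pos rfl] at h1
  have : (2:ℕ) ≠ 1 := by norm_num
  simp only [ha, hy, if_neg this, Nat.sub_self, Function.iterate_zero, id] at h2
  rw [Function.iterate_zero, id] at h1 -- maybe already done
  have e1 : dist z.1 (0 : AddCircle (1:ℝ)) < 1/8 := by
    have := (le_add_of_nonneg_right (dist_nonneg (x := z.2) (y := ((0:AddCircle (1:ℝ)), (0:AddCircle (1:ℝ)))))).trans_lt h1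
    simpa using this
  have key := iter_fst α T h (m+1) z
  have e2 : dist (z.1 + (m+1) • c) ((m+1) • c + w) < 1/8 := by
    have := (le_add_of_nonneg_right
      (dist_nonneg (x := (((fun p => (p.1 + c, T p.2 + h p.1))^[m+1] z)).2)
        (y := ((0:AddCircle (1:ℝ)), (0:AddCircle (1:ℝ)))))).trans_lt h2
    rw [key] at this
    simpa using this
  have e2' : dist z.1 w < 1/8 := by
    have : dist (z.1 + (m+1) • c) (w + (m+1) • c) < 1/8 := by
      rwa [add_comm ((m+1) • c) w] at e2
    rwa [dist_add_right] at this
  have hwnorm : dist (0 : AddCircle (1:ℝ)) w = 1/2 := by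
    rw [dist_eq_norm, zero_sub, norm_neg, hw, AddCircle.norm_eq]
    rw [show ((1:ℝ)/2) = 2⁻¹ by norm_num]
    simp only [inv_one, one_mul, mul_one]
    rw [round_two_inv]; norm_num
  have : dist (0 : AddCircle (1:ℝ)) w < 1/4 := by
    calc dist (0 : AddCircle (1:ℝ)) w ≤ dist (0:AddCircle (1:ℝ)) z.1 + dist z.1 w :=
      dist_triangle _ _ _
    _ < 1/8 + 1/8 := by rw [dist_comm]; exact add_lt_add e1 e2'
    _ = 1/4 := by norm_num
  rw [hwnorm] at this
  norm_num at this

end Paper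
end
end
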